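/- Let K be a field, I an ideal of R = K[m_{a,b} : 1 ≤ a,b ≤ n] given by northwest rank conditions, and (i,j,k) one of its defining triples, so that I contains all k × k minors of the northwest i × j submatrix of the generic matrix. Let A ⊆ {1,...,i} × {1,...,j} be an antidiagonal with |A| = k. Let S be any antidiagonal that contains a subset B with |B| = k which is weakly northwest of A, meaning that when the cells of B and of A are listed in order (rows increasing, columns decreasing), the t-th cell of B has row index at most the row index and column index at most the column index of the t-th cell of A. Then the polynomial det(S) vanishes at every matrix M ∈ K^{n×n} at which all elements of I vanish. -/

import Mathlib

open MvPolynomial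

/-- The generic `n × n` matrix, whose `(a,b)` entry is the variable `m_{a,b}` of
`K[m_{a,b} : 1 ≤ a,b ≤ n]`. -/
noncomputable def genericMatrix (n : ℕ) (K : Type*) [CommSemiring K] :
    Matrix (Fin n) (Fin n) (MvPolynomial (Fin n × Fin n) K) :=
  Matrix.of fun a b => X (a, b)

/-- For an antidiagonal given by strictly increasing rows `r` and strictly decreasing
columns `c`, `antidiagDet n K r c` is the determinant of the `k × k` submatrix of the
generic matrix on rows `r 0, …, r (k-1)` and columns `c (k-1), …, c 0`. -/
noncomputable def antidiagDet (n : ℕ) (K : Type*) [CommRing K] {k : ℕ}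
    (r c : Fin k → Fin n) : MvPolynomial (Fin n × Fin n) K :=
  ((genericMatrix n K).submatrix r (fun t => c t.rev)).det

/-- The set of all `k × k` minors of the northwest `i × j` submatrix of the generic
`n × n` matrix. -/
def nwMinors (n : ℕ) (K : Type*) [CommRing K] (i j k : ℕ) :
    Set (MvPolynomial (Fin n × Fin n) K) :=
  { f | ∃ r c : Fin k → Fin n, StrictMono r ∧ StrictMono c ∧
      (∀ t, (r t : ℕ) < i) ∧ (∀ t, (c t : ℕ) < j) ∧
      f = ((genericMatrix n K).submatrix r c).det }

/-- The ideal given by the northwest rank conditions recorded in a finite set `S` of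
triples `(i, j, k)`. -/
noncomputable def nwIdeal (n : ℕ) (K : Type*) [CommRing K] (S : Finset (ℕ × ℕ × ℕ)) :
    Ideal (MvPolynomial (Fin n × Fin n) K) :=
  Ideal.span (⋃ s ∈ S, nwMinors n K s.1 s.2.1 s.2.2)

section AuxLemmas

open Submodule Module Matrix

variable {K : Type*} [Field K]

/-- For a strictly monotone map between `Fin` types, values grow at least linearly. -/
lemma strictMono_fin_add {m n : ℕ} {φ : Fin m → Fin n} (hφ : StrictMono φ) :
    ∀ (d : ℕ) (s t : Fin m), (s : ℕ) + d = t → (φ s : ℕ) + d ≤ φ t := by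
  intro d
  induction d with
  | zero =>
    intro s t h
    have : s = t := Fin.ext (by omega)
    subst this; simp
  | succ d ih =>
    intro s t h
    have hlt : (s : ℕ) + d < m := by omega
    have h1 := ih s ⟨(s : ℕ) + d, hlt⟩ rfl
    have h2 : φ ⟨(s : ℕ) + d, hlt⟩ < φ t := hφ (by rw [Fin.lt_def]; simp; omega)
    rw [Fin.lt_def] at h2
    omega

/-- From a family of vectors whose span has dimension at least `k`, one can extract
a strictly monotone subfamily of `k` linearly independent vectors. -/
lemma exists_strictMono_linearIndependent {V : Type*} [AddCommGroup V] [Module K V]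
    {p k : ℕ} (v : Fin p → V)
    (h : k ≤ Module.finrank K (Submodule.span K (Set.range v))) :
    ∃ g : Fin k → Fin p, StrictMono g ∧ LinearIndependent K (v ∘ g) := by
  classical
  obtain ⟨b, hbsub, hbspan, hbind⟩ := exists_linearIndependent K (Set.range v)
  have hbfin : b.Finite := (Set.finite_range v).subset hbsub
  haveI : Fintype b := hbfin.fintype
  have hcard : Module.finrank K (span K b) = b.toFinset.card :=
    finrank_span_set_eq_card hbind
  have hk : k ≤ b.toFinset.card := by
    rw [← hcard, hbspan]; exact h
  choose idx hidx using fun (w : V) (hw : w ∈ b) => hbsub hw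
  let F : {w // w ∈ b.toFinset} → Fin p := fun w => idx w.1 (Set.mem_toFinset.mp w.2)
  have hvF : ∀ w, v (F w) = w.1 := fun w => hidx _ _
  have hFinj : Function.Injective F := by
    intro w w' hww
    have : v (F w) = v (F w') := by rw [hww]
    rw [hvF, hvF] at this
    exact Subtype.ext this
  set s : Finset (Fin p) := b.toFinset.attach.image F with hs
  have hscard : k ≤ s.card := by
    rw [hs, Finset.card_image_of_injective _ hFinj, Finset.card_attach]
    exact hk
  obtain ⟨t, hts, htcard⟩ := Finset.exists_subset_card_eq hscard
  let e := t.orderIsoOfFin htcard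
  refine ⟨fun u => (e u : Fin p), fun u u' huu => ?_, ?_⟩
  · exact Subtype.coe_lt_coe.2 (e.strictMono huu)
  · have hmem : ∀ u : Fin k, v ((e u : Fin p)) ∈ b := by
      intro u
      have : (e u : Fin p) ∈ s := hts (e u).2
      rw [hs, Finset.mem_image] at this
      obtain ⟨w, -, hw⟩ := this
      rw [← hw, hvF]
      exact Set.mem_toFinset.mp w.2
    have hind2 : LinearIndependent K (fun x : b => (x : V)) := hbind
    have := hind2.comp (fun u : Fin k => (⟨v ((e u : Fin p)), hmem u⟩ : b)) ?_
    · exact this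
    · intro u u' huu
      have h1 : v ((e u : Fin p)) = v ((e u' : Fin p)) := congrArg Subtype.val huu
      -- recover equality of indices through `F`
      have h2 : (e u : Fin p) ∈ s := hts (e u).2
      have h3 : (e u' : Fin p) ∈ s := hts (e u').2
      rw [hs, Finset.mem_image] at h2 h3
      obtain ⟨w, -, hw⟩ := h2
      obtain ⟨w', -, hw'⟩ := h3
      have hww : w = w' := by
        apply Subtype.ext
        rw [← hvF w, ← hvF w', hw, hw', h1]
      have : (e u : Fin p) = (e u' : Fin p) := by rw [← hw, ← hw', hww]
      exact e.injective (Subtype.ext this)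

/-- If all `k × k` minors (with strictly monotone row and column selections) of a matrix
vanish, its rank is less than `k`. -/
lemma rank_lt_of_minors_eq_zero {p q k : ℕ} (B : Matrix (Fin p) (Fin q) K)
    (h : ∀ (r : Fin k → Fin p) (c : Fin k → Fin q), StrictMono r → StrictMono c →
      (B.submatrix r c).det = 0) : B.rank < k := by
  by_contra hc
  push_neg at hc
  rw [Matrix.rank_eq_finrank_span_row] at hc
  obtain ⟨g, hg, hgi⟩ := exists_strictMono_linearIndependent (fun s => B s) hc
  set B1 := B.submatrix g id with hB1
  have h1 : LinearIndependent K (fun u => B1 u) := hgi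
  have hr1 : B1.rank = k := by
    have := LinearIndependent.rank_matrix (M := B1) h1
    simpa using this
  have hc2 : k ≤ Module.finrank K (span K (Set.range B1ᵀ)) := by
    have h2 : (B1ᵀ).rank = k := by rw [Matrix.rank_transpose, hr1]
    exact ((Matrix.rank_eq_finrank_span_row B1ᵀ).symm.trans h2).ge
  obtain ⟨g', hg', hgi'⟩ := exists_strictMono_linearIndependent B1ᵀ hc2
  have hunit : IsUnit (B1.submatrix id g') :=
    Matrix.linearIndependent_cols_iff_isUnit.1 hgi'
  have hdet0 : (B1.submatrix id g').det = 0 := by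
    have : B1.submatrix id g' = B.submatrix g g' := by
      ext u u'; simp [hB1]
    rw [this]
    exact h g g' hg hg'
  rw [Matrix.isUnit_iff_isUnit_det, hdet0] at hunit
  exact (by simpa using hunit.ne_zero : False)

lemma finrank_sup_le {V : Type*} [AddCommGroup V] [Module K V] [FiniteDimensional K V]
    (s t : Submodule K V) :
    Module.finrank K ↥(s ⊔ t) ≤ Module.finrank K s + Module.finrank K t := by
  have := Submodule.finrank_sup_add_finrank_inf_eq s t
  omega

end AuxLemmas

/-- Let `K` be a field, `I` an ideal of `K[m_{a,b}]` given by northwest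
rank conditions, with `(i,j,k)` one of its defining triples.  Let `A` (given by `rA, cA`)
be an antidiagonal with `|A| = k` contained in `{1,…,i} × {1,…,j}`.  Let `X` (given by
`rX, cX`) be any antidiagonal containing a subset `B` (picked out by the strictly
increasing `φ : Fin k → Fin kX`) with `|B| = k` which is weakly northwest of `A`, i.e. the
`t`-th cell of `B` has row index at most that of the `t`-th cell of `A` and column index at
most that of the `t`-th cell of `A`.  Then `det X` vanishes at every matrix
`M ∈ K^{n×n}` at which all elements of `I` vanish. -/
theorem eval_antidiagDet_eq_zero {K : Type*} [Field K] {n : ℕ}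
    (I : Ideal (MvPolynomial (Fin n × Fin n) K))
    (S : Finset (ℕ × ℕ × ℕ))
    (hS : ∀ s ∈ S, 0 < s.1 ∧ 0 < s.2.1 ∧ 0 < s.2.2)
    (hI : I = nwIdeal n K S)
    {i j k : ℕ} (hijk : (i, j, k) ∈ S)
    {kX : ℕ}
    (rA cA : Fin k → Fin n) (hrA : StrictMono rA) (hcA : StrictAnti cA)
    (hAbox : ∀ t, (rA t : ℕ) < i ∧ (cA t : ℕ) < j)
    (rX cX : Fin kX → Fin n) (hrX : StrictMono rX) (hcX : StrictAnti cX)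
    (φ : Fin k → Fin kX) (hφ : StrictMono φ)
    (hNW : ∀ t, rX (φ t) ≤ rA t ∧ cX (φ t) ≤ cA t)
    (M : Matrix (Fin n) (Fin n) K)
    (hM : ∀ f ∈ I, MvPolynomial.eval (fun p => M p.1 p.2) f = 0) :
    MvPolynomial.eval (fun p => M p.1 p.2) (antidiagDet n K rX cX) = 0 := by
  classical
  obtain ⟨hi, hj, hk⟩ := hS _ hijk
  obtain ⟨k', rfl⟩ := Nat.exists_eq_succ_of_ne_zero hk.ne'
  -- evaluating determinants of submatrices of the generic matrix
  have heval : ∀ (m : ℕ) (r c : Fin m → Fin n),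
      MvPolynomial.eval (fun p => M p.1 p.2) ((genericMatrix n K).submatrix r c).det
        = (M.submatrix r c).det := by
    intro m r c
    rw [RingHom.map_det]
    congr 1
    ext a b
    simp [genericMatrix, Matrix.map_apply, Matrix.submatrix_apply]
  -- every k×k minor of the northwest i×j submatrix of M vanishes
  have hgen : ∀ (r c : Fin (k' + 1) → Fin n), StrictMono r → StrictMono c →
      (∀ t, (r t : ℕ) < i) → (∀ t, (c t : ℕ) < j) → (M.submatrix r c).det = 0 := by
    intro r c hr hc hri hcj
    have hmem : ((genericMatrix n K).submatrix r c).det ∈ I := by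
      rw [hI, nwIdeal]
      apply Ideal.subset_span
      refine Set.mem_biUnion hijk ?_
      exact ⟨r, c, hr, hc, hri, hcj, rfl⟩
    have h0 := hM _ hmem
    rwa [heval] at h0
  -- reduce the goal
  rw [antidiagDet, heval]
  set M' := M.submatrix rX (fun t => cX (Fin.rev t)) with hM'
  by_contra hdet
  have hunit : IsUnit M' := (Matrix.isUnit_iff_isUnit_det _).2 (Ne.isUnit hdet)
  have hrows : LinearIndependent K (fun t => M' t) :=
    Matrix.linearIndependent_rows_iff_isUnit.2 hunit
  set t0 : Fin kX := φ 0 with ht0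
  set tmax : Fin kX := φ (Fin.last k') with htmax
  have hphi : (t0 : ℕ) + k' ≤ (tmax : ℕ) :=
    strictMono_fin_add hφ k' 0 (Fin.last k') (by simp)
  set a : ℕ := (tmax : ℕ) + 1 with ha_def
  set b : ℕ := kX - (t0 : ℕ) with hb_def
  have ha : a ≤ kX := tmax.isLt
  have hb : b ≤ kX := Nat.sub_le _ _
  have hab : kX + k' + 1 ≤ a + b := by
    have := t0.isLt
    omega
  -- the block inside the northwest box
  set Bk : Matrix (Fin a) (Fin b) K := M'.submatrix (Fin.castLE ha) (Fin.castLE hb)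
    with hBk
  have hBkrank : Bk.rank < k' + 1 := by
    apply rank_lt_of_minors_eq_zero
    intro r c hr hc
    have heq : Bk.submatrix r c
        = M.submatrix (fun u => rX (Fin.castLE ha (r u)))
            (fun u => cX ((Fin.castLE hb (c u)).rev)) := by
      ext u u'
      simp [hBk, hM', Matrix.submatrix_apply]
    rw [heq]
    apply hgen
    · intro u u' huu
      exact hrX (Fin.strictMono_castLE ha (hr huu))
    · intro u u' huu
      apply hcX
      rw [Fin.rev_lt_rev]
      exact Fin.strictMono_castLE hb (hc huu)
    · intro u
      have h1 : Fin.castLE ha (r u) ≤ tmax := by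
        rw [Fin.le_def]
        have := (r u).isLt
        simp only [Fin.coe_castLE]
        omega
      have h2 : rX (Fin.castLE ha (r u)) ≤ rA (Fin.last k') := by
        calc rX (Fin.castLE ha (r u)) ≤ rX tmax := hrX.monotone h1
        _ ≤ rA (Fin.last k') := (hNW (Fin.last k')).1
      calc (rX (Fin.castLE ha (r u)) : ℕ) ≤ (rA (Fin.last k') : ℕ) := h2
      _ < i := (hAbox (Fin.last k')).1
    · intro u
      have h1 : t0 ≤ (Fin.castLE hb (c u)).rev := by
        rw [Fin.le_def]
        rw [Fin.val_rev]
        have := (c u).isLt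
        have := t0.isLt
        simp only [Fin.coe_castLE]
        omega
      have h2 : cX ((Fin.castLE hb (c u)).rev) ≤ cA 0 := by
        calc cX ((Fin.castLE hb (c u)).rev) ≤ cX t0 := hcX.antitone h1
        _ ≤ cA 0 := (hNW 0).2
      calc (cX ((Fin.castLE hb (c u)).rev) : ℕ) ≤ (cA 0 : ℕ) := h2
      _ < j := (hAbox 0).2
  -- the top rows of M'
  set R1 : Matrix (Fin a) (Fin kX) K := M'.submatrix (Fin.castLE ha) id with hR1
  have h1 : LinearIndependent K (fun s => R1 s) :=
    hrows.comp (Fin.castLE ha) (Fin.castLE_injective ha)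
  have hR1rank : R1.rank = a := by
    have := LinearIndependent.rank_matrix (M := R1) h1
    simpa using this
  have hspan : a = Module.finrank K (Submodule.span K (Set.range R1.transpose)) := by
    exact (hR1rank.symm.trans (Matrix.rank_transpose R1).symm).trans (Matrix.rank_eq_finrank_span_row _)
  -- split the columns
  set colB : Fin b → (Fin a → K) := fun u => R1.transpose (Fin.castLE hb u) with hcolB
  set colD : Fin (kX - b) → (Fin a → K) :=
    fun u => R1.transpose ⟨b + (u : ℕ), by omega⟩ with hcolD
  have hsplit : Submodule.span K (Set.range R1.transpose)
      ≤ Submodule.span K (Set.range colB) ⊔ Submodule.span K (Set.range colD) := by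
    rw [Submodule.span_le]
    rintro _ ⟨t, rfl⟩
    by_cases hcase : (t : ℕ) < b
    · apply Submodule.mem_sup_left
      apply Submodule.subset_span
      refine ⟨⟨(t : ℕ), hcase⟩, ?_⟩
      show R1.transpose (Fin.castLE hb ⟨(t : ℕ), hcase⟩) = R1.transpose t
      exact congrArg R1.transpose (Fin.ext rfl)
    · apply Submodule.mem_sup_right
      apply Submodule.subset_span
      have h2 : (t : ℕ) - b < kX - b := by
        have := t.isLt
        omega
      refine ⟨⟨(t : ℕ) - b, h2⟩, ?_⟩
      show R1.transpose ⟨b + ((t : ℕ) - b), _⟩ = R1.transpose t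
      refine congrArg R1.transpose (Fin.ext ?_)
      show b + ((t : ℕ) - b) = (t : ℕ)
      omega
  have hfB : Module.finrank K (Submodule.span K (Set.range colB)) < k' + 1 := by
    have hBcol : colB = fun u => Bk.transpose u := by
      funext u
      rfl
    rw [hBcol]
    refine lt_of_eq_of_lt (Matrix.rank_eq_finrank_span_row Bk.transpose).symm ?_
    rw [Matrix.rank_transpose]
    exact hBkrank
  have hfD : Module.finrank K (Submodule.span K (Set.range colD)) ≤ kX - b := by
    calc Module.finrank K (Submodule.span K (Set.range colD))
        ≤ (Set.range colD).toFinset.card := finrank_span_le_card _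
    _ ≤ (kX - b) := by
        rw [Set.toFinset_range]
        calc (Finset.univ.image colD).card ≤ Finset.univ.card := Finset.card_image_le
        _ = kX - b := by simp
  have hfinal : a ≤ (Module.finrank K (Submodule.span K (Set.range colB)))
      + (Module.finrank K (Submodule.span K (Set.range colD))) := by
    refine le_trans (le_of_eq hspan) ?_
    calc Module.finrank K (Submodule.span K (Set.range R1.transpose))
        ≤ Module.finrank K ↥(Submodule.span K (Set.range colB)
            ⊔ Submodule.span K (Set.range colD)) := Submodule.finrank_mono hsplit
    _ ≤ _ := finrank_sup_le _ _
  omega
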